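/- Let k be a field and A a commutative integral domain equipped with an ℕ-grading 𝒜 : ℕ → Submodule k A making A a graded k-algebra. Let x ∈ A, let u : Fin r → A, and suppose the family Fin.cons x u : Fin (r+1) → A is algebraically independent over k. Then there exists d ∈ ℕ such that, denoting by x_d the degree-d homogeneous component of x (the image of x under the degree-d projection of the grading), the family Fin.cons x_d u is algebraically independent over k. In other words, an element that is part of an algebraically independent family can be replaced by one of its homogeneous components while preserving algebraic independence. -/

import Mathlib

open Polynomial in
/-- If `y • z` is integral over `R` for some nonzero `y : R` (`R` a domain),
then `z` is algebraic over `R`. -/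
theorem isAlgebraic_of_isIntegral_mul {R S : Type*} [CommRing R] [IsDomain R] [CommRing S]
    [Algebra R S] {z : S} {y : R} (hy : y ≠ 0)
    (hz : IsIntegral R (algebraMap R S y * z)) : IsAlgebraic R z := by
  obtain ⟨q, hq, hqz⟩ := hz
  refine ⟨q.comp (C y * X), ?_, ?_⟩
  · intro h0
    have hdeg : (C y * X).natDegree ≠ 0 := by
      rw [natDegree_C_mul_X y hy]; exact one_ne_zero
    have := Polynomial.leadingCoeff_comp (p := q) hdeg
    rw [h0, leadingCoeff_zero, leadingCoeff_C_mul_X, hq.leadingCoeff, one_mul] at this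
    exact pow_ne_zero _ hy this.symm
  · rw [aeval_comp]
    simpa [aeval_def] using hqz

/-- Sum of elements algebraic over a domain is algebraic. -/
theorem IsAlgebraic.add' {R S : Type*} [CommRing R] [IsDomain R] [CommRing S] [Nontrivial S]
    [Algebra R S] (hinj : Function.Injective (algebraMap R S)) {a b : S}
    (ha : IsAlgebraic R a) (hb : IsAlgebraic R b) : IsAlgebraic R (a + b) := by
  have inj : ∀ x, algebraMap R S x = 0 → x = 0 := fun x hx => hinj (by simpa using hx)
  obtain ⟨y₁, hy₁, hx₁⟩ := exists_integral_multiple ha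
  obtain ⟨y₂, hy₂, hx₂⟩ := exists_integral_multiple hb
  apply isAlgebraic_of_isIntegral_mul (mul_ne_zero hy₁ hy₂)
  have : algebraMap R S (y₁ * y₂) * (a + b)
      = algebraMap R S y₂ * (y₁ • a) + algebraMap R S y₁ * (y₂ • b) := by
    rw [Algebra.smul_def, Algebra.smul_def, map_mul]; ring
  rw [this]
  exact ((isIntegral_algebraMap).mul hx₁).add ((isIntegral_algebraMap).mul hx₂)

/-- A finite sum of elements algebraic over a domain is algebraic. -/
theorem IsAlgebraic.finsetSum {R S : Type*} [CommRing R] [IsDomain R] [CommRing S] [Nontrivial S]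
    [Algebra R S] (hinj : Function.Injective (algebraMap R S)) {ι : Type*} (s : Finset ι)
    (f : ι → S) (hf : ∀ i ∈ s, IsAlgebraic R (f i)) : IsAlgebraic R (∑ i ∈ s, f i) := by
  classical
  induction s using Finset.induction_on with
  | empty => simpa using isAlgebraic_zero
  | insert _ _ hi ih =>
    rw [Finset.sum_insert hi]
    exact IsAlgebraic.add' hinj (hf _ (Finset.mem_insert_self _ _))
      (ih fun i his => hf i (Finset.mem_insert_of_mem his))

theorem algebraicIndependent_finCons_iff {k A : Type*} [CommRing k] [CommRing A] [Algebra k A]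
    {r : ℕ} {a : A} {u : Fin r → A} (hu : AlgebraicIndependent k u) :
    AlgebraicIndependent k (Fin.cons a u : Fin (r + 1) → A) ↔
      Transcendental (Algebra.adjoin k (Set.range u)) a := by
  rw [← hu.option_iff_transcendental a]
  constructor
  · intro h
    have : (fun o : Option (Fin r) => o.elim a u)
        = (Fin.cons a u : Fin (r + 1) → A) ∘ (finSuccEquiv r).symm := by
      funext o; cases o <;> simp
    rw [this]
    exact h.comp _ (finSuccEquiv r).symm.injective
  · intro h
    have : (Fin.cons a u : Fin (r + 1) → A)
        = (fun o : Option (Fin r) => o.elim a u) ∘ (finSuccEquiv r) := by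
      funext i
      refine Fin.cases ?_ (fun j => ?_) i <;> simp
    rw [this]
    exact h.comp _ (finSuccEquiv r).injective

/-- **Replacing a member of an algebraically independent family by one of its
homogeneous components.**

Let `A` be a graded integral domain over a field `k`.  If the family
`Fin.cons x u : Fin (r+1) → A` is algebraically independent over `k`, then for
some degree `d` the family obtained by replacing `x` by its degree-`d`
homogeneous component is still algebraically independent over `k`. -/
theorem algIndep_cons_homogeneousComponent
    (k A : Type*) [Field k] [CommRing A] [IsDomain A] [Algebra k A]
    (𝒜 : ℕ → Submodule k A) [GradedAlgebra 𝒜] (r : ℕ)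
    (x : A) (u : Fin r → A)
    (h : AlgebraicIndependent k (Fin.cons x u : Fin (r + 1) → A)) :
    ∃ d : ℕ, AlgebraicIndependent k
      (Fin.cons ((DirectSum.decompose 𝒜 x d : 𝒜 d) : A) u : Fin (r + 1) → A) := by
  classical
  have hu : AlgebraicIndependent k u := by
    have := h.comp Fin.succ (Fin.succ_injective r)
    simpa using this
  set S := Algebra.adjoin k (Set.range u) with hS
  have hx : Transcendental S x := (algebraicIndependent_finCons_iff hu).mp h
  by_contra hcon
  push_neg at hcon
  have halg : ∀ d : ℕ, IsAlgebraic S ((DirectSum.decompose 𝒜 x d : 𝒜 d) : A) := by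
    intro d
    have := hcon d
    rw [algebraicIndependent_finCons_iff hu] at this
    rwa [Transcendental, not_not] at this
  apply hx
  have hinj : Function.Injective (algebraMap S A) := Subtype.val_injective
  have hsum := DirectSum.sum_support_decompose 𝒜 x
  rw [← hsum]
  exact IsAlgebraic.finsetSum hinj _ _ (fun d _ => halg d)
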